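/- Let P = V†V with ‖(P − I)x‖ ≤ ε‖x‖ for all x in a subspace W that is invariant under operators Q^{(1)},…,Q^{(M)} with ‖Q^{(i)}‖ ≤ 1, and let |ψ⟩ ∈ W be a unit vector with P|ψ⟩ = |ψ⟩. Then |⟨ψ|Q^{(M)} P Q^{(M−1)} ⋯ P Q^{(1)}|ψ⟩ − ⟨ψ|Q^{(M)} ⋯ Q^{(1)}|ψ⟩| ≤ (1+ε)^{M−1} − 1 ≤ (M−1)ε e^{(M−1)ε}. -/

import Mathlib

open ContinuousLinearMap

/-- If `P = V†V` satisfies `‖(P−I)x‖ ≤ ε‖x‖` on a subspace `W` invariant under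
the norm-`≤1` operators `Q^{(i)}` (and under `P−I`), and `ψ ∈ W` is a unit vector with
`Pψ = ψ`, then the spoofed `M`-point function `⟨ψ|Q^{(M)} P Q^{(M−1)} ⋯ P Q^{(1)}|ψ⟩`
differs from the true one by at most `(1+ε)^{M−1} − 1 ≤ (M−1)ε e^{(M−1)ε}`. -/
theorem stmt_17 (N n M : ℕ) (hM : 1 ≤ M) (ε : ℝ) (hε : 0 ≤ ε)
    (V : EuclideanSpace ℂ (Fin N) →L[ℂ] EuclideanSpace ℂ (Fin n))
    (P : EuclideanSpace ℂ (Fin N) →L[ℂ] EuclideanSpace ℂ (Fin N))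
    (hP : P = ContinuousLinearMap.adjoint V ∘L V)
    (W : Submodule ℂ (EuclideanSpace ℂ (Fin N)))
    (hPW : ∀ x ∈ W, ‖P x - x‖ ≤ ε * ‖x‖)
    (hPinv : ∀ x ∈ W, P x - x ∈ W)
    (Q : ℕ → (EuclideanSpace ℂ (Fin N) →L[ℂ] EuclideanSpace ℂ (Fin N)))
    (hQnorm : ∀ i, ‖Q i‖ ≤ 1)
    (hQinv : ∀ i, ∀ x ∈ W, Q i x ∈ W)
    (ψ : EuclideanSpace ℂ (Fin N)) (hψW : ψ ∈ W) (hψ : ‖ψ‖ = 1) (hψfix : P ψ = ψ)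
    (S : ℕ → (EuclideanSpace ℂ (Fin N) →L[ℂ] EuclideanSpace ℂ (Fin N)))
    (hS1 : S 1 = Q 1) (hSsucc : ∀ m, 1 ≤ m → S (m + 1) = Q (m + 1) ∘L S m)
    (R : ℕ → EuclideanSpace ℂ (Fin N))
    (hR1 : R 1 = Q 1 ψ) (hRsucc : ∀ m, 1 ≤ m → R (m + 1) = Q (m + 1) (P (R m))) :
    ‖(inner ℂ ψ (R M) : ℂ) - (inner ℂ ψ (S M ψ) : ℂ)‖ ≤ (1 + ε) ^ (M - 1) - 1 ∧
    (1 + ε) ^ (M - 1) - 1 ≤ (M - 1 : ℝ) * ε * Real.exp ((M - 1 : ℝ) * ε) := by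

  have key : ∀ m, 1 ≤ m → R m ∈ W ∧ ‖S m ψ‖ ≤ 1 ∧
      ‖R m - S m ψ‖ ≤ (1 + ε) ^ (m - 1) - 1 := by
    intro m hm
    induction m, hm using Nat.le_induction with
    | base =>
      refine ⟨hR1 ▸ hQinv 1 ψ hψW, ?_, ?_⟩
      · rw [hS1]
        calc ‖Q 1 ψ‖ ≤ ‖Q 1‖ * ‖ψ‖ := le_opNorm _ _
          _ ≤ 1 := by rw [hψ, mul_one]; exact hQnorm 1
      · simp [hR1, hS1]
    | succ m hm ih =>
      obtain ⟨hRW, hSle, hd⟩ := ih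
      have hpow0 : (0:ℝ) ≤ (1 + ε) ^ (m - 1) := pow_nonneg (by linarith) _
      have hpow : (1 + ε) ^ (m - 1) * (1 + ε) = (1 + ε) ^ m := by
        rw [← pow_succ, Nat.sub_add_cancel hm]
      have hPRW : P (R m) ∈ W := by
        have h := W.add_mem (hPinv _ hRW) hRW
        simpa using h
      have hRnorm : ‖R m‖ ≤ (1 + ε) ^ (m - 1) := by
        calc ‖R m‖ = ‖(R m - S m ψ) + S m ψ‖ := by rw [sub_add_cancel]
          _ ≤ ‖R m - S m ψ‖ + ‖S m ψ‖ := norm_add_le _ _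
          _ ≤ ((1 + ε) ^ (m - 1) - 1) + 1 := add_le_add hd hSle
          _ = (1 + ε) ^ (m - 1) := by ring
      refine ⟨?_, ?_, ?_⟩
      · rw [hRsucc m hm]; exact hQinv _ _ hPRW
      · rw [hSsucc m hm]
        calc ‖(Q (m+1) ∘L S m) ψ‖ = ‖Q (m+1) (S m ψ)‖ := rfl
          _ ≤ ‖Q (m+1)‖ * ‖S m ψ‖ := le_opNorm _ _
          _ ≤ 1 * 1 := mul_le_mul (hQnorm _) hSle (norm_nonneg _) zero_le_one
          _ = 1 := one_mul 1
      · rw [hRsucc m hm, hSsucc m hm]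
        have : ‖Q (m+1) (P (R m)) - (Q (m+1) ∘L S m) ψ‖
            = ‖Q (m+1) (P (R m) - S m ψ)‖ := by rw [map_sub]; rfl
        rw [this]
        have h1 : ‖Q (m+1) (P (R m) - S m ψ)‖ ≤ ‖P (R m) - S m ψ‖ := by
          calc ‖Q (m+1) (P (R m) - S m ψ)‖ ≤ ‖Q (m+1)‖ * ‖P (R m) - S m ψ‖ :=
                le_opNorm _ _
            _ ≤ 1 * ‖P (R m) - S m ψ‖ :=
                mul_le_mul_of_nonneg_right (hQnorm _) (norm_nonneg _)
            _ = _ := one_mul _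
        have h2 : ‖P (R m) - S m ψ‖ ≤ ‖P (R m) - R m‖ + ‖R m - S m ψ‖ := by
          calc ‖P (R m) - S m ψ‖ = ‖(P (R m) - R m) + (R m - S m ψ)‖ := by rw [sub_add_sub_cancel]
            _ ≤ _ := norm_add_le _ _
        have h3 : ‖P (R m) - R m‖ ≤ ε * ‖R m‖ := hPW _ hRW
        have h4 : ε * ‖R m‖ ≤ ε * (1 + ε) ^ (m - 1) :=
          mul_le_mul_of_nonneg_left hRnorm hε
        have : (m + 1 - 1 : ℕ) = m := rfl
        rw [this]
        nlinarith [hpow, hpow0]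
  obtain ⟨_, _, hdM⟩ := key M hM
  constructor
  · have h1 : (inner ℂ ψ (R M) : ℂ) - inner ℂ ψ (S M ψ) = inner ℂ ψ (R M - S M ψ) :=
      (inner_sub_right _ _ _).symm
    rw [h1]
    calc ‖(inner ℂ ψ (R M - S M ψ) : ℂ)‖ ≤ ‖ψ‖ * ‖R M - S M ψ‖ := norm_inner_le_norm _ _
      _ = ‖R M - S M ψ‖ := by rw [hψ, one_mul]
      _ ≤ _ := hdM
  · have hcast : ((M - 1 : ℕ) : ℝ) = (M : ℝ) - 1 := by
      rw [Nat.cast_sub hM, Nat.cast_one]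
    set k := M - 1 with hk
    set x := (k : ℝ) * ε with hx
    have hx0 : 0 ≤ x := mul_nonneg (Nat.cast_nonneg _) hε
    have hpow_le : (1 + ε) ^ k ≤ Real.exp x := by
      calc (1 + ε) ^ k ≤ (Real.exp ε) ^ k :=
            pow_le_pow_left₀ (by linarith) (by linarith [Real.add_one_le_exp ε]) _
        _ = Real.exp x := by rw [hx, ← Real.exp_nat_mul]
    have hineq : Real.exp x - 1 ≤ x * Real.exp x := by
      have h1 : 1 - x ≤ Real.exp (-x) := by linarith [Real.add_one_le_exp (-x)]
      have h2 : Real.exp (-x) * Real.exp x = 1 := by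
        rw [← Real.exp_add]; simp
      nlinarith [Real.exp_pos x]
    have : ((M:ℝ) - 1) * ε = x := by rw [hx, hcast]
    rw [this]
    linarith
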